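/- arXiv:2510.13523 — 3 statements merged into one kernel-verified Lean document; each statement's English description precedes it below -/
import Mathlib

section
/- Let n ≥ 1 and let d ∈ P^sp_B(2n+1) = P_{0,1}(2n+1). Then f_BC(d) := (d⁻)_C belongs to P^sp_C(2n) = P_{1,0}(2n). -/
/-- A partition of `N`: a non-increasing list of positive naturals summing to `N`. -/
def IsPartition (N : ℕ) (l : List ℕ) : Prop :=
  l.Pairwise (· ≥ ·) ∧ (∀ p ∈ l, 0 < p) ∧ l.sum = N

/-- Dominance order on partitions: `Dom p q` means `p ⪯ q`,
i.e. every initial partial sum of `p` is at most that of `q`. -/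
def Dom (p q : List ℕ) : Prop :=
  ∀ j : ℕ, (p.take j).sum ≤ (q.take j).sum

/-- The height `h_d(s) = #{j : d_j ≥ s}`. -/
def height (l : List ℕ) (s : ℕ) : ℕ :=
  (l.filter (fun p => decide (s ≤ p))).length

/-- Membership in `P_ε(N)`: every part congruent to `ε` mod 2 occurs with even multiplicity. -/
def PEps (e : ℕ) (l : List ℕ) : Prop :=
  ∀ s ∈ l, s % 2 = e % 2 → Even (l.count s)

/-- Membership in `P_{ε,ε'}(N)`: lies in `P_ε` and `h_d(s) ≡ ε'  (mod 2)` for every integer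
`s ≥ 0` with `s ≡ ε (mod 2)` which is either `0` or a part of `d`. -/
def PEpsEps (e e' : ℕ) (l : List ℕ) : Prop :=
  PEps e l ∧
    ∀ s : ℕ, s % 2 = e % 2 → (s = 0 ∨ s ∈ l) → height l s % 2 = e' % 2

/-- `d⁺ = [d₁ + 1, d₂, …, d_k]`. -/
def dplus : List ℕ → List ℕ
  | [] => []
  | a :: rest => (a + 1) :: rest

/-- `d⁻ = [d₁, …, d_{k−1}, d_k − 1]`, the last entry removed if `d_k = 1`. -/
def dminus (l : List ℕ) : List ℕ :=
  (l.dropLast ++ [l.getLastD 0 - 1]).filter (fun p => decide (0 < p))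

/-- `IsCollapse e N l c` says that `c` is the collapse of `l` into `P_e`: the greatest
element, in the dominance order, of the set of partitions of `N` lying in `P_e` and
dominated by `l`. -/
def IsCollapse (e N : ℕ) (l c : List ℕ) : Prop :=
  IsPartition N c ∧ PEps e c ∧ Dom c l ∧
    ∀ m : List ℕ, IsPartition N m → PEps e m → Dom m l → Dom m c

def W (l : List ℕ) (t : ℕ) : ℕ := (l.map (fun x => min x t)).sum

lemma W_cons (a : ℕ) (l : List ℕ) (t : ℕ) : W (a::l) t = min a t + W l t := by simp [W]

lemma W_append (l₁ l₂ : List ℕ) (t : ℕ) : W (l₁ ++ l₂) t = W l₁ t + W l₂ t := by simp [W]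

lemma W_zero (l : List ℕ) : W l 0 = 0 := by simp [W]

lemma height_cons (a : ℕ) (l : List ℕ) (s : ℕ) :
    height (a::l) s = (if s ≤ a then 1 else 0) + height l s := by
  by_cases h : s ≤ a <;> simp [height, List.filter_cons, h, Nat.add_comm]

lemma height_zero (l : List ℕ) : height l 0 = l.length := by
  simp [height, Nat.zero_le]

lemma W_succ (l : List ℕ) (t : ℕ) : W l (t+1) = W l t + height l (t+1) := by
  induction l with
  | nil => rfl
  | cons a l ih =>
    rw [W_cons, W_cons, height_cons, ih]
    by_cases h : t+1 ≤ a <;> simp [h] <;> omega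

lemma height_split (l : List ℕ) (t : ℕ) : height l t = l.count t + height l (t+1) := by
  induction l with
  | nil => rfl
  | cons a l ih =>
    rw [height_cons, height_cons, List.count_cons, ih]
    by_cases h : a = t <;> simp [h] <;> first | omega | (split_ifs <;> omega)

lemma length_filter_ne_add_count (l : List ℕ) (a : ℕ) :
    (l.filter (fun x => !decide (x = a))).length + l.count a = l.length := by
  induction l with
  | nil => rfl
  | cons b tl ih =>
    by_cases h : b = a <;> simp [List.filter_cons, List.count_cons, h] <;> omega

lemma even_length_aux : ∀ (n : ℕ) (l : List ℕ), l.length ≤ n →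
    (∀ v ∈ l, Even (l.count v)) → Even l.length := by
  intro n
  induction n with
  | zero =>
    intro l hl _
    have : l.length = 0 := by omega
    simp [this]
  | succ n ih =>
    intro l hl h
    match l with
    | [] => simp
    | a :: tl =>
      set l' := (a::tl).filter (fun x => !decide (x = a)) with hl'
      have hkey := length_filter_ne_add_count (a::tl) a
      rw [← hl'] at hkey
      have hca : Even ((a::tl).count a) := h a (by simp)
      have hcpos : 0 < (a::tl).count a := by
        rw [List.count_pos_iff]; simp
      have hlen' : l'.length ≤ n := by
        have : l'.length + (a::tl).count a = (a::tl).length := hkey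
        have hl2 : (a::tl).length ≤ n + 1 := hl
        omega
      have h' : ∀ v ∈ l', Even (l'.count v) := by
        intro v hv
        have hmem := List.mem_filter.mp hv
        have hvne : v ≠ a := by simpa using hmem.2
        have : l'.count v = (a::tl).count v := List.count_filter (by simpa using hvne)
        rw [this]
        exact h v hmem.1
      have hfin := ih l' hlen' h'
      rw [Nat.even_iff] at hfin hca ⊢
      omega

lemma even_length_of_even_counts (l : List ℕ) (h : ∀ v ∈ l, Even (l.count v)) :
    Even l.length := even_length_aux l.length l le_rfl h

lemma length_filter_cons (p : ℕ → Bool) (a : ℕ) (l : List ℕ) :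
    (List.filter p (a::l)).length = (if p a then 1 else 0) + (List.filter p l).length := by
  rw [List.filter_cons]; split_ifs <;> simp [Nat.add_comm]

lemma W_parity_even (l : List ℕ) (t : ℕ) (ht : t % 2 = 0) :
    (W l t + (l.filter (fun x => decide (x % 2 = 1) && decide (x < t))).length) % 2 = 0 := by
  induction l with
  | nil => simp [W]
  | cons a l ih =>
    rw [W_cons, length_filter_cons]
    rcases Nat.mod_two_eq_zero_or_one a with h1 | h1 <;> by_cases h2 : a < t <;>
      simp [h1, h2] <;> (try split_ifs) <;> omega

lemma W_parity_odd (l : List ℕ) (t : ℕ) (ht : t % 2 = 1) :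
    (W l t + (l.filter (fun x => decide (x % 2 = 1) && decide (x < t))).length + height l t) % 2 = 0 := by
  induction l with
  | nil => simp [W, height]
  | cons a l ih =>
    rw [W_cons, List.filter_cons, height_cons]
    by_cases h1 : a % 2 = 1 <;> by_cases h2 : a < t <;> simp [h1, h2] <;>
      first | omega | (split_ifs <;> omega)

lemma three_way (l : List ℕ) (t : ℕ) :
    (l.filter (fun x => decide (x % 2 = 1) && decide (x < t))).length
      + (l.filter (fun x => decide (x % 2 = 0) && decide (x < t))).length
      + height l t = l.length := by
  induction l with
  | nil => rfl
  | cons a l ih =>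
    rw [length_filter_cons, length_filter_cons, height_cons, List.length_cons]
    rcases Nat.mod_two_eq_zero_or_one a with h1 | h1 <;> by_cases h2 : a < t <;>
      simp [h1, h2] <;> (try split_ifs) <;> omega

lemma even_filter_length (l : List ℕ) (e : ℕ) (hP : PEps e l) (p : ℕ → Bool)
    (hp : ∀ v, p v = true → v % 2 = e % 2) : Even ((l.filter p).length) := by
  apply even_length_of_even_counts
  intro v hv
  have hmem := List.mem_filter.mp hv
  rw [List.count_filter hmem.2]
  exact hP v hmem.1 (hp v hmem.2)

lemma W_even (l : List ℕ) (t : ℕ) (hP : PEps 1 l) (ht : t % 2 = 0) : W l t % 2 = 0 := by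
  have h1 := W_parity_even l t ht
  have h2 : Even ((l.filter (fun x => decide (x % 2 = 1) && decide (x < t))).length) := by
    apply even_filter_length l 1 hP
    intro v hv
    simp at hv
    omega
  rw [Nat.even_iff] at h2
  omega

lemma W_odd (l : List ℕ) (t : ℕ) (hP : PEps 0 l) (hk : l.length % 2 = 1) (ht : t % 2 = 1) :
    W l t % 2 = 1 := by
  have h1 := W_parity_odd l t ht
  have h2 : Even ((l.filter (fun x => decide (x % 2 = 0) && decide (x < t))).length) := by
    apply even_filter_length l 0 hP
    intro v hv
    simp at hv
    omega
  have h3 := three_way l t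
  rw [Nat.even_iff] at h2
  omega

lemma W_le_sum (l : List ℕ) (t : ℕ) : W l t ≤ l.sum := by
  induction l with
  | nil => simp [W]
  | cons a l ih => rw [W_cons, List.sum_cons]; have := min_le_left a t; omega

lemma W_le_len (l : List ℕ) (t : ℕ) : W l t ≤ l.length * t := by
  induction l with
  | nil => simp [W]
  | cons a l ih =>
    rw [W_cons, List.length_cons, Nat.succ_mul]
    have := min_le_right a t; omega

lemma W_of_all_ge {l : List ℕ} {t : ℕ} (h : ∀ x ∈ l, t ≤ x) : W l t = l.length * t := by
  induction l with
  | nil => simp [W]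
  | cons a l ih =>
    rw [W_cons, List.length_cons, Nat.succ_mul, ih (fun x hx => h x (by simp [hx]))]
    have : min a t = t := min_eq_right (h a (by simp))
    omega

lemma W_of_all_le {l : List ℕ} {t : ℕ} (h : ∀ x ∈ l, x ≤ t) : W l t = l.sum := by
  induction l with
  | nil => simp [W]
  | cons a l ih =>
    rw [W_cons, List.sum_cons, ih (fun x hx => h x (by simp [hx]))]
    have : min a t = a := min_eq_left (h a (by simp))
    omega

lemma I1 (l : List ℕ) (t j : ℕ) : (l.take j).sum + W l t ≤ j * t + l.sum := by
  have h1 : W l t = W (l.take j) t + W (l.drop j) t := by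
    rw [← W_append, List.take_append_drop]
  have h2 : l.sum = (l.take j).sum + (l.drop j).sum := by
    rw [← List.sum_append, List.take_append_drop]
  have h3 : W (l.take j) t ≤ j * t := by
    calc W (l.take j) t ≤ (l.take j).length * t := W_le_len _ _
    _ ≤ j * t := Nat.mul_le_mul_right _ (List.length_take_le _ _)
  have h4 := W_le_sum (l.drop j) t
  omega

lemma sorted_cons_le {a : ℕ} {l : List ℕ} (h : (a::l).Pairwise (· ≥ ·)) : ∀ x ∈ l, x ≤ a :=
  fun x hx => (List.pairwise_cons.mp h).1 x hx

lemma filter_ge_eq_take {l : List ℕ} (hs : l.Pairwise (· ≥ ·)) (s : ℕ) :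
    l.filter (fun x => decide (s ≤ x)) = l.take (height l s) := by
  induction l with
  | nil => rfl
  | cons a tl ih =>
    have htl : tl.Pairwise (· ≥ ·) := hs.of_cons
    by_cases h : s ≤ a
    · have hh : height (a::tl) s = height tl s + 1 := by
        rw [height_cons]; simp [h]; omega
      rw [hh, List.take_succ_cons, List.filter_cons]
      simp [h, ih htl]
    · have hnil : tl.filter (fun x => decide (s ≤ x)) = [] := by
        apply List.filter_eq_nil_iff.mpr
        intro x hx
        have := sorted_cons_le hs x hx
        simp; omega
      have hh : height (a::tl) s = 0 := by
        simp [height, List.filter_cons, h, hnil]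
      rw [hh]
      simp [List.filter_cons, h, hnil]

lemma filter_le_eq_drop {l : List ℕ} (hs : l.Pairwise (· ≥ ·)) (s : ℕ) :
    l.filter (fun x => decide (x < s)) = l.drop (height l s) := by
  induction l with
  | nil => rfl
  | cons a tl ih =>
    have htl : tl.Pairwise (· ≥ ·) := hs.of_cons
    by_cases h : s ≤ a
    · have hh : height (a::tl) s = height tl s + 1 := by
        rw [height_cons]; simp [h]; omega
      have hsa : ¬ (a < s) := by omega
      rw [hh, List.drop_succ_cons, List.filter_cons]
      simp [hsa, ih htl]
    · have hall : ∀ x ∈ (a::tl), x < s := by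
        intro x hx
        rcases List.mem_cons.mp hx with rfl | hx
        · omega
        · have := sorted_cons_le hs x hx; omega
      have hh : height (a::tl) s = 0 := by
        simp only [height]
        rw [List.filter_eq_nil_iff.mpr]
        · rfl
        · intro x hx; have := hall x hx; simp; omega
      rw [hh, List.drop_zero]
      apply List.filter_eq_self.mpr
      intro x hx
      simpa using hall x hx

lemma I2 {l : List ℕ} (hs : l.Pairwise (· ≥ ·)) (t : ℕ) :
    (l.take (height l (t+1))).sum + W l t = (height l (t+1)) * t + l.sum := by
  set j := height l (t+1) with hj
  have hTake : l.take j = l.filter (fun x => decide (t+1 ≤ x)) := (filter_ge_eq_take hs _).symm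
  have hDrop : l.drop j = l.filter (fun x => decide (x < t+1)) := (filter_le_eq_drop hs _).symm
  have hWsplit : W l t = W (l.take j) t + W (l.drop j) t := by
    rw [← W_append, List.take_append_drop]
  have hSsplit : l.sum = (l.take j).sum + (l.drop j).sum := by
    rw [← List.sum_append, List.take_append_drop]
  have h1 : W (l.take j) t = j * t := by
    rw [W_of_all_ge (l := l.take j) (t := t) ?_]
    · rw [hTake]
      rfl
    · intro x hx
      rw [hTake] at hx
      have := List.of_mem_filter hx
      simp at this; omega
  have h2 : W (l.drop j) t = (l.drop j).sum := by
    apply W_of_all_le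
    intro x hx
    rw [hDrop] at hx
    have := List.of_mem_filter hx
    simp at this; omega
  omega

lemma I3 {l : List ℕ} (hs : l.Pairwise (· ≥ ·)) (j : ℕ) :
    ∃ t, (l.take j).sum + W l t = j * t + l.sum := by
  rcases hd : l.drop j with _ | ⟨b, tl⟩
  · refine ⟨0, ?_⟩
    have hlen : l.length ≤ j := by
      have := List.length_drop (i := j) (l := l)
      rw [hd] at this
      simp at this; omega
    rw [W_zero, List.take_of_length_le hlen]
    simp
  · refine ⟨b, ?_⟩
    have hsplit := List.take_append_drop j l
    have hpw : ∀ x ∈ l.take j, ∀ y ∈ l.drop j, y ≤ x := by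
      have : (l.take j ++ l.drop j).Pairwise (· ≥ ·) := by rw [hsplit]; exact hs
      intro x hx y hy
      exact (List.pairwise_append.mp this).2.2 x hx y hy
    have hdropsorted : (l.drop j).Pairwise (· ≥ ·) := by
      have : (l.take j ++ l.drop j).Pairwise (· ≥ ·) := by rw [hsplit]; exact hs
      exact (List.pairwise_append.mp this).2.1
    have hbmem : b ∈ l.drop j := by rw [hd]; simp
    have hdle : ∀ y ∈ l.drop j, y ≤ b := by
      intro y hy
      rw [hd] at hy hdropsorted
      rcases List.mem_cons.mp hy with rfl | hy
      · exact le_rfl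
      · exact sorted_cons_le hdropsorted y hy
    have hjlen : j ≤ l.length := by
      by_contra hc
      have : l.drop j = [] := List.drop_eq_nil_of_le (by omega)
      rw [hd] at this; simp at this
    have hWsplit : W l b = W (l.take j) b + W (l.drop j) b := by
      rw [← W_append, hsplit]
    have hSsplit : l.sum = (l.take j).sum + (l.drop j).sum := by
      rw [← List.sum_append, hsplit]
    have h1 : W (l.take j) b = j * b := by
      rw [W_of_all_ge (fun x hx => hpw x hx b hbmem)]
      rw [List.length_take, min_eq_left hjlen]
    have h2 : W (l.drop j) b = (l.drop j).sum := W_of_all_le hdle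
    omega

lemma Dom_imp_W {p q : List ℕ} (hp : p.Pairwise (· ≥ ·)) (hsum : p.sum = q.sum)
    (hD : Dom p q) : ∀ t, W q t ≤ W p t := by
  intro t
  have h2 := I2 hp t
  have h1 := I1 q t (height p (t+1))
  have h3 := hD (height p (t+1))
  omega

lemma W_imp_Dom {p q : List ℕ} (hq : q.Pairwise (· ≥ ·)) (hsum : p.sum = q.sum)
    (hW : ∀ t, W q t ≤ W p t) : Dom p q := by
  intro j
  obtain ⟨t, h3⟩ := I3 hq j
  have h1 := I1 p t j
  have h2 := hW t
  omega

lemma sum_filter_pos (l : List ℕ) : (l.filter (fun x => decide (0 < x))).sum = l.sum := by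
  induction l with
  | nil => rfl
  | cons a l ih =>
    rw [List.filter_cons]
    by_cases h : 0 < a <;> simp [h, ih] <;> omega

lemma W_filter_pos (l : List ℕ) (t : ℕ) : W (l.filter (fun x => decide (0 < x))) t = W l t := by
  induction l with
  | nil => rfl
  | cons a l ih =>
    rw [List.filter_cons, W_cons]
    by_cases h : 0 < a
    · simp only [h, decide_true, if_true, W_cons, ih]
    · have : a = 0 := by omega
      subst this
      simp [ih]

lemma count_filter_pos (l : List ℕ) (v : ℕ) (hv : 0 < v) :
    (l.filter (fun x => decide (0 < x))).count v = l.count v :=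
  List.count_filter (by simpa using hv)

lemma sorted_filter {l : List ℕ} (hs : l.Pairwise (· ≥ ·)) (p : ℕ → Bool) :
    (l.filter p).Pairwise (· ≥ ·) :=
  List.Pairwise.sublist (List.filter_sublist (l := l)) hs

lemma W_replicate (n x t : ℕ) : W (List.replicate n x) t = n * min x t := by
  induction n with
  | zero => simp [W]
  | succ n ih => rw [List.replicate_succ, W_cons, ih, Nat.succ_mul]; omega

lemma sorted_replicate (n x : ℕ) : (List.replicate n x).Pairwise (· ≥ ·) :=
  List.pairwise_replicate.mpr (Or.inr (le_refl x))

lemma sorted_decomp {l : List ℕ} (hs : l.Pairwise (· ≥ ·)) (t0 : ℕ) :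
    l = l.filter (fun x => decide (t0 < x)) ++
        (List.replicate (l.count t0) t0 ++ l.filter (fun x => decide (x < t0))) := by
  induction l with
  | nil => rfl
  | cons a tl ih =>
    have htl : tl.Pairwise (· ≥ ·) := hs.of_cons
    have hle := sorted_cons_le hs
    have ihtl := ih htl
    rcases Nat.lt_trichotomy t0 a with h | h | h
    · have h1 : ¬ (a < t0) := by omega
      have h2' : ¬ (a = t0) := by omega
      rw [List.filter_cons, List.filter_cons, List.count_cons]
      simp only [h, h1, h2', decide_true, decide_false, if_true, if_false,
        Bool.false_eq_true, beq_iff_eq, Nat.add_zero, List.cons_append,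
        List.cons.injEq, true_and]
      exact ihtl
    · subst h
      have hgt : tl.filter (fun x => decide (t0 < x)) = [] := by
        apply List.filter_eq_nil_iff.mpr
        intro x hx
        have := hle x hx
        simp; omega
      have hgt2 : (t0::tl).filter (fun x => decide (t0 < x)) = [] := by
        rw [List.filter_cons]
        simp [hgt]
      have hcnt : (t0::tl).count t0 = tl.count t0 + 1 := by
        rw [List.count_cons]; simp
      rw [hgt2, hcnt, List.replicate_succ, List.filter_cons]
      rw [hgt] at ihtl
      simp only [List.nil_append] at ihtl
      simp only [Nat.lt_irrefl, decide_false, if_false, Bool.false_eq_true,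
        List.nil_append, List.cons_append, List.cons.injEq, true_and]
      exact ihtl
    · have h1 : ¬ (t0 < a) := by omega
      have hnotmem : t0 ∉ (a :: tl) := by
        intro hmem
        rcases List.mem_cons.mp hmem with rfl | hmem
        · omega
        · have := hle _ hmem; omega
      have hcnt : (a::tl).count t0 = 0 := List.count_eq_zero.mpr hnotmem
      have hgt2 : (a::tl).filter (fun x => decide (t0 < x)) = [] := by
        apply List.filter_eq_nil_iff.mpr
        intro x hx
        rcases List.mem_cons.mp hx with rfl | hx
        · simp; omega
        · have := hle x hx; simp; omega
      rw [hgt2, hcnt]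
      simp only [List.replicate_zero, List.nil_append]
      apply (List.filter_eq_self.mpr ?_).symm
      intro x hx
      rcases List.mem_cons.mp hx with rfl | hx
      · simp; omega
      · have := hle x hx; simp; omega

lemma dropLast_append_getLastD {d : List ℕ} (hne : d ≠ []) :
    d.dropLast ++ [d.getLastD 0] = d := by
  rw [List.getLastD_eq_getLast?, List.getLast?_eq_getLast (l := d) hne]
  exact List.dropLast_append_getLast hne

lemma getLastD_mem {d : List ℕ} (hne : d ≠ []) : d.getLastD 0 ∈ d := by
  have h : d.getLastD 0 ∈ d.dropLast ++ [d.getLastD 0] :=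
    List.mem_append.mpr (Or.inr (List.mem_singleton_self _))
  rwa [dropLast_append_getLastD hne] at h

lemma getLastD_le {d : List ℕ} (hs : d.Pairwise (· ≥ ·)) (hne : d ≠ []) :
    ∀ x ∈ d, d.getLastD 0 ≤ x := by
  intro x hx
  rw [← dropLast_append_getLastD hne] at hx hs
  rcases List.mem_append.mp hx with hx | hx
  · exact (List.pairwise_append.mp hs).2.2 x hx _ (List.mem_singleton_self _)
  · rw [List.mem_singleton] at hx
    omega

lemma dminus_sorted {d : List ℕ} (hs : d.Pairwise (· ≥ ·)) (hne : d ≠ []) :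
    (dminus d).Pairwise (· ≥ ·) := by
  apply sorted_filter
  apply List.pairwise_append.mpr
  refine ⟨?_, by simp, ?_⟩
  · have := hs
    rw [← dropLast_append_getLastD hne] at this
    exact (List.pairwise_append.mp this).1
  · intro a ha b hb
    rw [List.mem_singleton] at hb
    subst hb
    have hmem : a ∈ d := by
      have h : a ∈ d.dropLast ++ [d.getLastD 0] := List.mem_append.mpr (Or.inl ha)
      rwa [dropLast_append_getLastD hne] at h
    have h1 : d.getLastD 0 ≤ a := getLastD_le hs hne a hmem
    omega

lemma dminus_sum {d : List ℕ} (hne : d ≠ []) (hpos : 0 < d.getLastD 0) :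
    (dminus d).sum + 1 = d.sum := by
  have h1 : (dminus d).sum = d.dropLast.sum + (d.getLastD 0 - 1) := by
    rw [dminus, sum_filter_pos, List.sum_append]
    simp
  have h2 : d.sum = d.dropLast.sum + d.getLastD 0 := by
    conv_lhs => rw [← dropLast_append_getLastD hne]
    rw [List.sum_append]; simp
  omega

lemma W_dminus {d : List ℕ} (hne : d ≠ []) (hpos : 0 < d.getLastD 0) (t : ℕ) :
    W (dminus d) t + (if d.getLastD 0 ≤ t then 1 else 0) = W d t := by
  have h1 : W (dminus d) t = W d.dropLast t + min (d.getLastD 0 - 1) t := by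
    rw [dminus, W_filter_pos, W_append, W_cons]
    simp [W]
  have h2 : W d t = W d.dropLast t + min (d.getLastD 0) t := by
    conv_lhs => rw [← dropLast_append_getLastD hne]
    rw [W_append, W_cons]
    simp [W]
  rw [h1, h2]
  split_ifs <;> omega

/-- If `d ∈ P^sp_B(2n+1) = P_{0,1}(2n+1)` then `f_BC(d) = (d⁻)_C` lies in
`P^sp_C(2n) = P_{1,0}(2n)`. -/
theorem fBC_mem (n : ℕ) (hn : 1 ≤ n) (d : List ℕ)
    (hd : IsPartition (2 * n + 1) d) (hdB : PEpsEps 0 1 d)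
    (e : List ℕ) (he : IsCollapse 1 (2 * n) (dminus d) e) :
    PEpsEps 1 0 e := by
  obtain ⟨hs_d, hpos_d, hsum_d⟩ := hd
  obtain ⟨⟨hs_e, hpos_e, hsum_e⟩, hP1e, hDom_e, hmax⟩ := he
  obtain ⟨hP0d, hhd⟩ := hdB
  refine ⟨hP1e, ?_⟩
  intro t0 ht0 hcase
  have ht0' : t0 % 2 = 1 := by omega
  rcases hcase with rfl | hmem
  · omega
  by_contra hodd0
  have hodd : height e t0 % 2 = 1 := by omega
  have hne : d ≠ [] := by
    intro h
    rw [h] at hsum_d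
    simp only [List.sum_nil] at hsum_d
    omega
  have hdmpos : 0 < d.getLastD 0 := hpos_d _ (getLastD_mem hne)
  have hsum_mu : (dminus d).sum + 1 = d.sum := dminus_sum hne hdmpos
  have hsum_mu' : (dminus d).sum = 2 * n := by omega
  have hmusorted := dminus_sorted hs_d hne
  have hkodd : d.length % 2 = 1 := by
    have h0 := hhd 0 (by norm_num) (Or.inl rfl)
    rw [height_zero] at h0
    omega
  have hWe_ge : ∀ t, W (dminus d) t ≤ W e t :=
    Dom_imp_W hs_e (by omega : e.sum = (dminus d).sum) hDom_e
  obtain ⟨u, rfl⟩ : ∃ u, t0 = u + 1 := ⟨t0 - 1, by omega⟩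
  have hEu : W e u % 2 = 0 := W_even e u hP1e (by omega)
  have hEu2 : W e (u+2) % 2 = 0 := W_even e (u+2) hP1e (by omega)
  have hWd : W d (u+1) % 2 = 1 := W_odd d (u+1) hP0d hkodd (by omega)
  have hsucc1 : W e (u+1) = W e u + height e (u+1) := W_succ e u
  have hsucc2 : W e (u+2) = W e (u+1) + height e (u+2) := by
    have h := W_succ e (u+1)
    have h2 : u + 1 + 1 = u + 2 := rfl
    rwa [h2] at h
  have hsplit : height e (u+1) = e.count (u+1) + height e (u+2) := by
    have h := height_split e (u+1)
    have h2 : u + 1 + 1 = u + 2 := rfl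
    rwa [h2] at h
  have hcnt1 : 0 < e.count (u+1) := List.count_pos_iff.mpr hmem
  have hE1odd : W e (u+1) % 2 = 1 := by omega
  rcases Nat.lt_or_ge (W (dminus d) (u+1)) (W e (u+1)) with hgap | hge
  · -- competitor case: move a box out of the block of (u+1)'s
    set c := e.count (u+1) with hc
    have hceven : Even c := hP1e (u+1) hmem (by omega)
    have hc2 : 2 ≤ c := by
      obtain ⟨r, hr⟩ := hceven; omega
    set A := e.filter (fun x => decide (u+1 < x)) with hA
    set B := e.filter (fun x => decide (x < u+1)) with hB
    have hdecomp : e = A ++ (List.replicate c (u+1) ++ B) := sorted_decomp hs_e (u+1)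
    set m0 := A ++ ((u+2) :: (List.replicate (c-2) (u+1) ++ (u :: B))) with hm0
    set m := m0.filter (fun x => decide (0 < x)) with hm
    have hAmem : ∀ x ∈ A, u+1 < x := by
      intro x hx; have := List.of_mem_filter hx; simpa using this
    have hBmem : ∀ x ∈ B, x < u+1 := by
      intro x hx; have := List.of_mem_filter hx; simpa using this
    have hAsorted : A.Pairwise (· ≥ ·) := sorted_filter hs_e _
    have hBsorted : B.Pairwise (· ≥ ·) := sorted_filter hs_e _
    have hm0sorted : m0.Pairwise (· ≥ ·) := by
      apply List.pairwise_append.mpr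
      refine ⟨hAsorted, ?_, ?_⟩
      · apply List.pairwise_cons.mpr
        constructor
        · intro b hb
          rcases List.mem_append.mp hb with hb | hb
          · have := List.eq_of_mem_replicate hb; omega
          · rcases List.mem_cons.mp hb with rfl | hb
            · omega
            · have := hBmem b hb; omega
        · apply List.pairwise_append.mpr
          refine ⟨sorted_replicate _ _, ?_, ?_⟩
          · apply List.pairwise_cons.mpr
            exact ⟨fun b hb => by have := hBmem b hb; omega, hBsorted⟩
          · intro a ha b hb
            have ha' := List.eq_of_mem_replicate ha
            rcases List.mem_cons.mp hb with rfl | hb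
            · omega
            · have := hBmem b hb; omega
      · intro a ha b hb
        have haA := hAmem a ha
        rcases List.mem_cons.mp hb with rfl | hb
        · omega
        rcases List.mem_append.mp hb with hb | hb
        · have := List.eq_of_mem_replicate hb; omega
        · rcases List.mem_cons.mp hb with rfl | hb
          · omega
          · have := hBmem b hb; omega
    have hmsorted : m.Pairwise (· ≥ ·) := sorted_filter hm0sorted _
    have hmpos : ∀ x ∈ m, 0 < x := by
      intro x hx; have := List.of_mem_filter hx; simpa using this
    have hsumE : e.sum = A.sum + (c * (u+1) + B.sum) := by
      conv_lhs => rw [hdecomp]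
      rw [List.sum_append, List.sum_append, List.sum_replicate]
      simp [smul_eq_mul]
    have hmul : c * (u+1) = (c-2)*(u+1) + 2*(u+1) := by
      have hh : c - 2 + 2 = c := by omega
      conv_lhs => rw [← hh]
      ring
    have hsum_m0 : m0.sum = e.sum := by
      have h1 : m0.sum = A.sum + ((u+2) + ((c-2)*(u+1) + (u + B.sum))) := by
        rw [hm0, List.sum_append, List.sum_cons, List.sum_append, List.sum_replicate,
          List.sum_cons]
        simp
      omega
    have hsum_m : m.sum = 2 * n := by
      rw [hm, sum_filter_pos]; omega
    have hP1m : PEps 1 m := by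
      intro v hv hvodd
      have hv0 : 0 < v := hmpos v hv
      have hvodd' : v % 2 = 1 := by omega
      have hcm : m.count v = m0.count v := count_filter_pos m0 v hv0
      have hvne2 : v ≠ u + 2 := by omega
      have hvneu : v ≠ u := by omega
      have hcm0 : m0.count v = A.count v + ((if v = u+1 then c-2 else 0) + B.count v) := by
        rw [hm0, List.count_append, List.count_cons, List.count_append, List.count_cons,
          List.count_replicate]
        simp only [beq_iff_eq]
        split_ifs <;> omega
      by_cases hv1 : v = u + 1
      · subst hv1
        have hcA : A.count (u+1) = 0 := List.count_eq_zero.mpr (fun h => by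
          have := hAmem _ h; omega)
        have hcB : B.count (u+1) = 0 := List.count_eq_zero.mpr (fun h => by
          have := hBmem _ h; omega)
        rw [hcm, hcm0, hcA, hcB, if_pos rfl]
        obtain ⟨r, hr⟩ := hceven
        exact ⟨r - 1, by omega⟩
      · have hcE : e.count v = A.count v + ((if v = u+1 then c else 0) + B.count v) := by
          conv_lhs => rw [hdecomp]
          rw [List.count_append, List.count_append, List.count_replicate]
          simp only [beq_iff_eq]
          by_cases hv1' : v = u + 1
          · exact absurd hv1' hv1
          · rw [if_neg (fun h => hv1 h.symm), if_neg hv1']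
        have hvmem : v ∈ e := by
          have hvm0 : v ∈ m0 := (List.mem_filter.mp hv).1
          rw [hm0] at hvm0
          rcases List.mem_append.mp hvm0 with h | h
          · rw [hdecomp]; exact List.mem_append.mpr (Or.inl h)
          · rcases List.mem_cons.mp h with h | h
            · omega
            rcases List.mem_append.mp h with h | h
            · have := List.eq_of_mem_replicate h; omega
            rcases List.mem_cons.mp h with h | h
            · omega
            · rw [hdecomp]
              exact List.mem_append.mpr (Or.inr (List.mem_append.mpr (Or.inr h)))
        have hEve := hP1e v hvmem hvodd
        rw [hcm, hcm0, if_neg hv1]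
        rw [hcE, if_neg hv1] at hEve
        obtain ⟨r, hr⟩ := hEve
        exact ⟨r, by omega⟩
    have hWm0 : ∀ t, W m0 t + 2 * min (u+1) t = W e t + (min (u+2) t + min u t) := by
      intro t
      have h1 : W m0 t = W A t + (min (u+2) t + ((c-2) * min (u+1) t + (min u t + W B t))) := by
        rw [hm0, W_append, W_cons, W_append, W_replicate, W_cons]
      have h2 : W e t = W A t + (c * min (u+1) t + W B t) := by
        conv_lhs => rw [hdecomp]
        rw [W_append, W_append, W_replicate]
      have h3 : c * min (u+1) t = (c-2) * min (u+1) t + 2 * min (u+1) t := by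
        have hh : c - 2 + 2 = c := by omega
        conv_lhs => rw [← hh]
        ring
      omega
    have hWmeq : ∀ t, W m t = W m0 t := fun t => W_filter_pos m0 t
    have hWmge : ∀ t, W (dminus d) t ≤ W m t := by
      intro t
      rw [hWmeq t]
      have h0 := hWm0 t
      by_cases hts : t = u + 1
      · subst hts
        omega
      · have := hWe_ge t
        omega
    have hDom_m : Dom m (dminus d) := W_imp_Dom hmusorted (by omega : m.sum = (dminus d).sum) hWmge
    have hDom_me : Dom m e := hmax m ⟨hmsorted, hmpos, hsum_m⟩ hP1m hDom_m
    have hWfin := Dom_imp_W hmsorted (by omega : m.sum = e.sum) hDom_me (u+1)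
    have h0 := hWm0 (u+1)
    rw [hWmeq (u+1)] at hWfin
    omega
  · -- equality case: parity contradiction
    have heq : W (dminus d) (u+1) = W e (u+1) := le_antisymm (hWe_ge _) hge
    have hWmu := W_dminus hne hdmpos (u+1)
    by_cases hdmle : d.getLastD 0 ≤ u + 1
    · rw [if_pos hdmle] at hWmu
      omega
    · rw [if_neg hdmle] at hWmu
      have hlin : ∀ t, t ≤ d.getLastD 0 → W d t = d.length * t := by
        intro t ht
        rw [W_of_all_ge (fun x hx => le_trans ht (getLastD_le hs_d hne x hx))]
      have hWdu : W d u = d.length * u := hlin u (by omega)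
      have hWdu1 : W d (u+1) = d.length * (u+1) := hlin (u+1) (by omega)
      have hWdu2 : W d (u+2) = d.length * (u+2) := hlin (u+2) (by omega)
      have hMu := W_dminus hne hdmpos u
      rw [if_neg (by omega)] at hMu
      have hMu2 := W_dminus hne hdmpos (u+2)
      have hMu2' : W d (u+2) ≤ W (dminus d) (u+2) + 1 := by
        rcases le_or_gt (d.getLastD 0) (u+2) with h | h
        · rw [if_pos h] at hMu2; omega
        · rw [if_neg (by omega)] at hMu2; omega
      have hgeu := hWe_ge u
      have hgeu2 := hWe_ge (u+2)
      have hm1 : d.length * (u+1) = d.length * u + d.length := by ring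
      have hm2 : d.length * (u+2) = d.length * (u+1) + d.length := by ring
      have hm2even : d.length * (u+2) % 2 = 0 := by
        have he2 : Even (d.length * (u+2)) := Even.mul_left (by omega : Even (u+2)) _
        omega
      omega
end

section
/- Let n ≥ 1 and let d ∈ P^sp_C(2n) = P_{1,0}(2n). Then f_CB(d) := (d⁺)_B belongs to P^sp_B(2n+1) = P_{0,1}(2n+1). -/
lemma take_sum_succ (l : List ℕ) (j : ℕ) :
    (l.take (j + 1)).sum = (l.take j).sum + l.getD j 0 := by
  rcases lt_or_ge j l.length with h | h
  · rw [List.take_succ, List.sum_append, List.getD_eq_getElem l 0 h]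
    simp [List.getElem?_eq_getElem h]
  · rw [List.take_of_length_le h, List.take_of_length_le (by omega),
      List.getD_eq_default l 0 h]
    simp

lemma getD_anti {l : List ℕ} (hl : l.Pairwise (· ≥ ·)) {i j : ℕ} (hij : i ≤ j) :
    l.getD j 0 ≤ l.getD i 0 := by
  rcases lt_or_ge j l.length with h | h
  · have hi : i < l.length := lt_of_le_of_lt hij h
    rw [List.getD_eq_getElem l 0 h, List.getD_eq_getElem l 0 hi]
    rcases eq_or_lt_of_le hij with rfl | hlt
    · exact le_refl _
    · exact List.pairwise_iff_getElem.1 hl i j hi h hlt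
  · rw [List.getD_eq_default l 0 h]; exact Nat.zero_le _

lemma height_le_length (l : List ℕ) (t : ℕ) : height l t ≤ l.length :=
  List.length_filter_le _ _

lemma take_height {t : ℕ} : ∀ {l : List ℕ}, l.Pairwise (· ≥ ·) →
    l.take (height l t) = l.filter (fun p => decide (t ≤ p))
  | [], _ => by simp [height]
  | a :: l, hl => by
    rcases List.pairwise_cons.1 hl with ⟨ha, hl'⟩
    by_cases h : t ≤ a
    · have h1 : (a :: l).filter (fun p => decide (t ≤ p))
          = a :: l.filter (fun p => decide (t ≤ p)) := by
        simp [List.filter_cons, h]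
      have h2 : height (a :: l) t = height l t + 1 := by
        simp [height, h1]
      rw [h2, h1, List.take_succ_cons, take_height hl']
    · have hnil : (a :: l).filter (fun p => decide (t ≤ p)) = [] := by
        rw [List.filter_eq_nil_iff]
        intro x hx
        rcases List.mem_cons.1 hx with rfl | hx
        · simpa using h
        · have : x ≤ a := ha x hx
          simp; omega
      rw [height, hnil]; simp

lemma height_succ_add_count (l : List ℕ) (t : ℕ) :
    height l t = height l (t + 1) + l.count t := by
  induction l with
  | nil => simp [height]
  | cons a l ih =>
    by_cases h1 : t ≤ a
    · by_cases h2 : a = t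
      · subst h2
        have e1 : height (a :: l) a = height l a + 1 := by
          simp [height, List.filter_cons]
        have e2 : height (a :: l) (a + 1) = height l (a + 1) := by
          simp [height, List.filter_cons]
        have e3 : (a :: l).count a = l.count a + 1 := by
          simp [List.count_cons]
        rw [e1, e2, e3]; omega
      · have ht1 : t + 1 ≤ a := by omega
        have e1 : height (a :: l) t = height l t + 1 := by
          simp [height, List.filter_cons, h1]
        have e2 : height (a :: l) (t + 1) = height l (t + 1) + 1 := by
          simp [height, List.filter_cons, show t < a by omega]
        have e3 : (a :: l).count t = l.count t := by
          simp [List.count_cons, h2]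
        rw [e1, e2, e3]; omega
    · have ht1 : ¬ (t + 1 ≤ a) := by omega
      have h2 : ¬ (a = t) := by omega
      have e1 : height (a :: l) t = height l t := by
        simp [height, List.filter_cons, h1]
      have e2 : height (a :: l) (t + 1) = height l (t + 1) := by
        simp [height, List.filter_cons, show ¬ t < a by omega]
      have e3 : (a :: l).count t = l.count t := by
        simp [List.count_cons, h2]
      rw [e1, e2, e3]; omega

lemma le_getD_of_lt_height {l : List ℕ} (hl : l.Pairwise (· ≥ ·)) {t p : ℕ}
    (h : p < height l t) : t ≤ l.getD p 0 := by
  have hlen : p < l.length := lt_of_lt_of_le h (height_le_length l t)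
  have hlen' : p < (l.take (height l t)).length := by
    rw [List.length_take]; omega
  have h1 : (l.take (height l t))[p] = l[p] := List.getElem_take
  have h2 : l[p] ∈ l.take (height l t) := h1 ▸ List.getElem_mem hlen'
  rw [take_height hl] at h2
  have := List.of_mem_filter h2
  rw [List.getD_eq_getElem l 0 hlen]
  simpa using this

lemma getD_lt_of_height_le {l : List ℕ} (hl : l.Pairwise (· ≥ ·)) {t p : ℕ}
    (ht : 1 ≤ t) (h : height l t ≤ p) : l.getD p 0 < t := by
  rcases lt_or_ge p l.length with hp | hp
  · rw [List.getD_eq_getElem l 0 hp]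
    by_contra hcon
    push_neg at hcon
    have hall : (l.take (p + 1)).filter (fun q => decide (t ≤ q)) = l.take (p + 1) := by
      rw [List.filter_eq_self]
      intro x hx
      obtain ⟨q, hq, rfl⟩ := List.mem_iff_getElem.1 hx
      have hq0 : q < l.length := by
        rw [List.length_take] at hq; omega
      have hqE : (l.take (p + 1))[q] = l[q] := List.getElem_take
      rw [hqE]
      have hmono : l[p] ≤ l[q] := by
        have := getD_anti hl (show q ≤ p by rw [List.length_take] at hq; omega)
        rwa [List.getD_eq_getElem l 0 hp, List.getD_eq_getElem l 0 hq0] at this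
      simp; omega
    have hsub : List.Sublist ((l.take (p + 1)).filter (fun q => decide (t ≤ q)))
        (l.filter (fun q => decide (t ≤ q))) :=
      List.Sublist.filter _ (List.take_sublist _ _)
    have hlen := hsub.length_le
    rw [hall, List.length_take] at hlen
    have : min (p + 1) l.length = p + 1 := by omega
    rw [this] at hlen
    have : height l t = (l.filter (fun q => decide (t ≤ q))).length := rfl
    omega
  · rw [List.getD_eq_default l 0 hp]; omega

lemma sum_mod_two (l : List ℕ) :
    l.sum % 2 = (l.filter (fun v => decide (v % 2 = 1))).length % 2 := by
  induction l with
  | nil => simp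
  | cons a l ih =>
    by_cases h : a % 2 = 1
    · simp only [List.filter_cons, h, decide_eq_true_eq, List.sum_cons, List.length_cons]
      simp [h]
      omega
    · have hd : (decide (a % 2 = 1)) = false := by simp [h]
      simp only [List.filter_cons, List.sum_cons, hd, if_false, Bool.false_eq_true]
      omega

lemma filter_parity_length (l : List ℕ) :
    (l.filter (fun v => decide (v % 2 = 1))).length
      + (l.filter (fun v => decide (v % 2 = 0))).length = l.length := by
  induction l with
  | nil => simp
  | cons a l ih =>
    by_cases h : a % 2 = 1
    · have h0 : ¬ (a % 2 = 0) := by omega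
      simp [List.filter_cons, h, h0]
      omega
    · have h0 : a % 2 = 0 := by omega
      simp [List.filter_cons, h, h0]
      omega

lemma even_length_of_counts (L : List ℕ) (h : ∀ v ∈ L, Even (L.count v)) :
    Even L.length := by
  have key := Multiset.toFinset_sum_count_eq (L : Multiset ℕ)
  rw [show Multiset.card (L : Multiset ℕ) = L.length from rfl] at key
  rw [← key]
  apply Finset.even_sum
  intro v hv
  have hvL : v ∈ L := by simpa using hv
  simpa using h v hvL

lemma even_par_take_height (par t : ℕ) {l : List ℕ} (hl : l.Pairwise (· ≥ ·))
    (hmult : ∀ v ∈ l, v % 2 = par → Even (l.count v)) :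
    Even (((l.take (height l t)).filter (fun v => decide (v % 2 = par))).length) := by
  rw [take_height hl]
  apply even_length_of_counts
  intro v hv
  have hv1 : v ∈ l.filter (fun p => decide (t ≤ p)) := List.mem_of_mem_filter hv
  have hpar : v % 2 = par := by simpa using List.of_mem_filter hv
  have htv : t ≤ v := by simpa using List.of_mem_filter hv1
  have hvl : v ∈ l := List.mem_of_mem_filter hv1
  rw [List.count_filter (by simp [hpar]), List.count_filter (by simp [htv])]
  exact hmult v hvl hpar

lemma sum_take_block (l : List ℕ) (b s : ℕ) :
    ∀ r, (∀ q, b ≤ q → q < b + r → l.getD q 0 = s) →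
      (l.take (b + r)).sum = (l.take b).sum + r * s := by
  intro r
  induction r with
  | zero => simp
  | succ r ih =>
    intro h
    have : b + (r + 1) = (b + r) + 1 := by omega
    rw [this, take_sum_succ, ih (fun q hq hq' => h q hq (by omega)),
      h (b + r) (by omega) (by omega)]
    ring

lemma take_drop_replicate (l : List ℕ) (a b s : ℕ) (hb : b ≤ l.length)
    (h : ∀ q, a ≤ q → q < b → l.getD q 0 = s) :
    (l.take b).drop a = List.replicate (b - a) s := by
  apply List.eq_replicate_iff.2
  constructor
  · rw [List.length_drop, List.length_take]; omega
  · intro x hx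
    obtain ⟨q, hq, rfl⟩ := List.mem_iff_getElem.1 hx
    have hq' : a + q < b := by
      rw [List.length_drop, List.length_take] at hq; omega
    rw [List.getElem_drop, List.getElem_take]
    have hlen : a + q < l.length := by omega
    rw [← List.getD_eq_getElem l 0 hlen]
    exact h (a + q) (by omega) hq'

lemma sum_take_height_even (t : ℕ) {d : List ℕ} (hd : d.Pairwise (· ≥ ·))
    (hmult : ∀ v ∈ d, v % 2 = 1 → Even (d.count v)) :
    (d.take (height d t)).sum % 2 = 0 := by
  have h1 := sum_mod_two (d.take (height d t))
  have h2 := even_par_take_height 1 t hd hmult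
  obtain ⟨k, hk⟩ := h2
  omega

lemma sum_take_height_mod (t : ℕ) {l : List ℕ} (hl : l.Pairwise (· ≥ ·))
    (hmult : ∀ v ∈ l, v % 2 = 0 → Even (l.count v)) :
    (l.take (height l t)).sum % 2 = height l t % 2 := by
  have h1 := sum_mod_two (l.take (height l t))
  have h2 := even_par_take_height 0 t hl hmult
  have h3 := filter_parity_length (l.take (height l t))
  have h4 : (l.take (height l t)).length = height l t := by
    rw [List.length_take]
    have := height_le_length l t
    omega
  obtain ⟨k, hk⟩ := h2
  omega

lemma mem_take_height {t : ℕ} {l : List ℕ} (hl : l.Pairwise (· ≥ ·)) {v : ℕ}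
    (hv : v ∈ l.take (height l t)) : t ≤ v := by
  rw [take_height hl] at hv
  simpa using List.of_mem_filter hv

lemma mem_drop_height {t : ℕ} {l : List ℕ} (hl : l.Pairwise (· ≥ ·)) (ht : 1 ≤ t) {v : ℕ}
    (hv : v ∈ l.drop (height l t)) : v < t := by
  obtain ⟨q, hq, rfl⟩ := List.mem_iff_getElem.1 hv
  rw [List.getElem_drop]
  have hlen : height l t + q < l.length := by rw [List.length_drop] at hq; omega
  rw [← List.getD_eq_getElem l 0 hlen]
  exact getD_lt_of_height_le hl ht (by omega)

lemma dplus_take_sum (a : ℕ) (l : List ℕ) (j : ℕ) (hj : 1 ≤ j) :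
    ((dplus (a :: l)).take j).sum = ((a :: l).take j).sum + 1 := by
  obtain ⟨j', rfl⟩ : ∃ j', j = j' + 1 := ⟨j - 1, by omega⟩
  show (((a + 1) :: l).take (j' + 1)).sum = _
  rw [List.take_succ_cons, List.take_succ_cons, List.sum_cons, List.sum_cons]
  omega

/-- If `d ∈ P^sp_C(2n) = P_{1,0}(2n)` then `f_CB(d) = (d⁺)_B` lies in
`P^sp_B(2n+1) = P_{0,1}(2n+1)`. -/
theorem fCB_mem (n : ℕ) (hn : 1 ≤ n) (d : List ℕ)
    (hd : IsPartition (2 * n) d) (hdC : PEpsEps 1 0 d)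
    (e : List ℕ) (he : IsCollapse 0 (2 * n + 1) (dplus d) e) :
    PEpsEps 0 1 e := by
  obtain ⟨⟨hesort, hepos, hesum⟩, hePeps, heDom, hemax⟩ := he
  obtain ⟨hdsort, hdpos, hdsum⟩ := hd
  refine ⟨hePeps, ?_⟩
  intro s hs2 hs0
  have hs2' : s % 2 = 0 := by simpa using hs2
  have hePeps' : ∀ v ∈ e, v % 2 = 0 → Even (e.count v) := by
    intro v hv h0
    exact hePeps v hv (by simpa using h0)
  rcases hs0 with rfl | hse
  · -- s = 0 : parity of the length
    rw [height_zero]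
    have h1 := sum_mod_two e
    have h2 := even_par_take_height 0 0 hesort hePeps'
    rw [height_zero, List.take_length] at h2
    have h3 := filter_parity_length e
    rw [hesum] at h1
    obtain ⟨k, hk⟩ := h2
    omega
  · -- main case: s an even part of e
    by_contra hgoal
    have hodd : height e s % 2 = 0 := by omega
    have hs1 : 0 < s := hepos s hse
    have hsge2 : 2 ≤ s := by omega
    have hic : height e s = height e (s + 1) + e.count s := height_succ_add_count e s
    have hcnt_even : Even (e.count s) := hePeps s hse (by simpa using hs2')
    have hcnt2 : 2 ≤ e.count s := by
      have hpos : 0 < e.count s := List.count_pos_iff.2 hse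
      obtain ⟨k, hk⟩ := hcnt_even
      omega
    have hilen : height e s ≤ e.length := height_le_length e s
    have ha0i : height e (s + 1) + 2 ≤ height e s := by omega
    have heblockv : ∀ q, height e (s + 1) ≤ q → q < height e s → e.getD q 0 = s := by
      intro q hq1 hq2
      have h1 := le_getD_of_lt_height hesort hq2
      have h2 := getD_lt_of_height_le hesort (show 1 ≤ s + 1 by omega) hq1
      omega
    obtain ⟨d0, dt, rfl⟩ : ∃ d0 dt, d = d0 :: dt := by
      cases d with
      | nil => simp at hdsum; omega
      | cons a l => exact ⟨a, l, rfl⟩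
    -- strict dominance in the interior of the s-block of e
    have strict : ∀ j, height e (s + 1) + 1 ≤ j → j + 1 ≤ height e s →
        (e.take j).sum + 1 ≤ ((dplus (d0 :: dt)).take j).sum := by
      intro j hj1 hj2
      by_contra hcon
      push_neg at hcon
      have heq : (e.take j).sum = ((dplus (d0 :: dt)).take j).sum :=
        le_antisymm (heDom j) (by omega)
      have hgd1 : e.getD (j - 1) 0 = s := heblockv (j - 1) (by omega) (by omega)
      have hgd2 : e.getD j 0 = s := heblockv j (by omega) (by omega)
      have hup := heDom (j + 1)
      rw [take_sum_succ, take_sum_succ, hgd2] at hup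
      have h1 : s ≤ (dplus (d0 :: dt)).getD j 0 := by omega
      have hdown := heDom (j - 1)
      have hj' : j = (j - 1) + 1 := by omega
      have heq' := heq
      rw [hj', take_sum_succ, take_sum_succ, hgd1] at heq'
      have h2 : (dplus (d0 :: dt)).getD (j - 1) 0 ≤ s := by omega
      rcases Nat.lt_or_ge j 2 with hjlt | hjge
      · -- j = 1
        have hj1' : j = 1 := by omega
        subst hj1'
        have e0 : (dplus (d0 :: dt)).getD 0 0 = d0 + 1 := rfl
        have e1 : (dplus (d0 :: dt)).getD 1 0 = (d0 :: dt).getD 1 0 := rfl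
        have e2 : (d0 :: dt).getD 0 0 = d0 := rfl
        have hanti := getD_anti hdsort (show 0 ≤ 1 by omega)
        rw [e0] at h2
        rw [e1] at h1
        omega
      · -- j ≥ 2
        have hDj : (dplus (d0 :: dt)).getD j 0 = (d0 :: dt).getD j 0 := by
          obtain ⟨p, rfl⟩ : ∃ p, j = p + 1 := ⟨j - 1, by omega⟩
          rfl
        have hDj1 : (dplus (d0 :: dt)).getD (j - 1) 0 = (d0 :: dt).getD (j - 1) 0 := by
          obtain ⟨p, hp⟩ : ∃ p, j - 1 = p + 1 := ⟨j - 2, by omega⟩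
          rw [hp]; rfl
        rw [hDj] at h1
        rw [hDj1] at h2
        have hanti := getD_anti hdsort (show j - 1 ≤ j by omega)
        have hdgj : (d0 :: dt).getD j 0 = s := by omega
        have hdgj1 : (d0 :: dt).getD (j - 1) 0 = s := by omega
        have hb_le : height (d0 :: dt) (s + 1) ≤ j - 1 := by
          by_contra hb
          push_neg at hb
          have := le_getD_of_lt_height hdsort hb
          omega
        have hj_lt : j < height (d0 :: dt) s := by
          by_contra hb
          push_neg at hb
          have := getD_lt_of_height_le hdsort (show 1 ≤ s by omega) hb
          omega
        have hdblockv : ∀ q, height (d0 :: dt) (s + 1) ≤ q → q < j →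
            (d0 :: dt).getD q 0 = s := by
          intro q hq1 hq2
          have hx1 := le_getD_of_lt_height hdsort (show q < height (d0 :: dt) s by omega)
          have hx2 := getD_lt_of_height_le hdsort (show 1 ≤ s + 1 by omega) hq1
          omega
        have hSdj : ((d0 :: dt).take j).sum
            = ((d0 :: dt).take (height (d0 :: dt) (s + 1))).sum
              + (j - height (d0 :: dt) (s + 1)) * s := by
          have hkey := sum_take_block (d0 :: dt) (height (d0 :: dt) (s + 1)) s
            (j - height (d0 :: dt) (s + 1))
            (fun q hq1 hq2 => hdblockv q hq1 (by omega))
          rw [show height (d0 :: dt) (s + 1) + (j - height (d0 :: dt) (s + 1)) = j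
            by omega] at hkey
          exact hkey
        have hdpeps : ∀ v ∈ (d0 :: dt), v % 2 = 1 → Even ((d0 :: dt).count v) := by
          intro v hv h1v
          exact hdC.1 v hv (by simpa using h1v)
        have hSb := sum_take_height_even (s + 1) hdsort hdpeps
        obtain ⟨u, hu⟩ : ∃ u, s = 2 * u := ⟨s / 2, by omega⟩
        have hmul : (j - height (d0 :: dt) (s + 1)) * s
            = 2 * ((j - height (d0 :: dt) (s + 1)) * u) := by rw [hu]; ring
        have hSdj2 : ((d0 :: dt).take j).sum % 2 = 0 := by
          rw [hSdj, hmul]; omega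
        have hSDj : ((dplus (d0 :: dt)).take j).sum = ((d0 :: dt).take j).sum + 1 :=
          dplus_take_sum d0 dt j (by omega)
        have hSej : (e.take j).sum
            = (e.take (height e (s + 1))).sum + (j - height e (s + 1)) * s := by
          have hkey := sum_take_block e (height e (s + 1)) s (j - height e (s + 1))
            (fun q hq1 hq2 => heblockv q hq1 (by omega))
          rw [show height e (s + 1) + (j - height e (s + 1)) = j by omega] at hkey
          exact hkey
        have hSea := sum_take_height_mod (s + 1) hesort hePeps'
        have hmul2 : (j - height e (s + 1)) * s
            = 2 * ((j - height e (s + 1)) * u) := by rw [hu]; ring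
        obtain ⟨k, hk⟩ := hcnt_even
        rw [hSej, hmul2, hSDj] at heq
        omega
    -- construction of a competitor partition M
    obtain ⟨c2, hc2⟩ : ∃ c2, e.count s = c2 + 2 := ⟨e.count s - 2, by omega⟩
    have hE1len : (e.take (height e (s + 1))).length = height e (s + 1) := by
      rw [List.length_take]
      have := height_le_length e (s + 1)
      omega
    have hE1mem : ∀ v ∈ e.take (height e (s + 1)), s + 1 ≤ v :=
      fun v hv => mem_take_height hesort hv
    have hE3mem : ∀ v ∈ e.drop (height e s), v < s :=
      fun v hv => mem_drop_height hesort (by omega) hv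
    have hE1sorted : (e.take (height e (s + 1))).Pairwise (· ≥ ·) :=
      List.Pairwise.sublist (List.take_sublist _ _) hesort
    have hE3sorted : (e.drop (height e s)).Pairwise (· ≥ ·) :=
      List.Pairwise.sublist (List.drop_sublist _ _) hesort
    have hmid : (e.take (height e s)).drop (height e (s + 1))
        = List.replicate (e.count s) s := by
      have hkey := take_drop_replicate e (height e (s + 1)) (height e s) s hilen heblockv
      rw [show height e s - height e (s + 1) = e.count s by omega] at hkey
      exact hkey
    have hQ : e.take (height e s)
        = e.take (height e (s + 1)) ++ List.replicate (e.count s) s := by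
      conv_lhs => rw [← List.take_append_drop (height e (s + 1)) (e.take (height e s))]
      rw [List.take_take, show height e (s + 1) ⊓ height e s = height e (s + 1) by omega,
        hmid]
    set P : List ℕ :=
      e.take (height e (s + 1)) ++ ((s + 1) :: (List.replicate c2 s ++ [s - 1])) with hP
    set M : List ℕ := P ++ e.drop (height e s) with hMdef
    have hM2 : M = e.take (height e (s + 1))
        ++ ((s + 1) :: (List.replicate c2 s ++ ((s - 1) :: e.drop (height e s)))) := by
      rw [hMdef, hP]
      simp [List.append_assoc]
    have hPlen : P.length = height e s := by
      rw [hP]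
      simp [hE1len]
      omega
    have hMsorted : M.Pairwise (· ≥ ·) := by
      rw [hM2]
      apply List.pairwise_append.2
      refine ⟨hE1sorted, ?_, ?_⟩
      · apply List.pairwise_cons.2
        refine ⟨?_, ?_⟩
        · intro b hb
          rcases List.mem_append.1 hb with hb | hb
          · have := List.eq_of_mem_replicate hb; omega
          · rcases List.mem_cons.1 hb with rfl | hb
            · omega
            · have := hE3mem b hb; omega
        · apply List.pairwise_append.2
          refine ⟨List.pairwise_replicate.2 (Or.inr (le_refl s)), ?_, ?_⟩
          · exact List.pairwise_cons.2 ⟨fun b hb => by have := hE3mem b hb; omega, hE3sorted⟩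
          · intro x hx y hy
            have hx' := List.eq_of_mem_replicate hx
            rcases List.mem_cons.1 hy with rfl | hy
            · omega
            · have := hE3mem y hy; omega
      · intro x hx y hy
        have hx' := hE1mem x hx
        rcases List.mem_cons.1 hy with rfl | hy
        · omega
        · rcases List.mem_append.1 hy with hy | hy
          · have := List.eq_of_mem_replicate hy; omega
          · rcases List.mem_cons.1 hy with rfl | hy
            · omega
            · have := hE3mem y hy; omega
    have hMpos : ∀ p ∈ M, 0 < p := by
      rw [hM2]
      intro p hp
      rcases List.mem_append.1 hp with hp | hp
      · have := hE1mem p hp; omega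
      · rcases List.mem_cons.1 hp with rfl | hp
        · omega
        · rcases List.mem_append.1 hp with hp | hp
          · have := List.eq_of_mem_replicate hp; omega
          · rcases List.mem_cons.1 hp with rfl | hp
            · omega
            · exact hepos p (List.mem_of_mem_drop hp)
    have hPsum : P.sum = (e.take (height e s)).sum := by
      rw [hP, hQ]
      simp only [List.sum_append, List.sum_cons, List.sum_replicate, smul_eq_mul,
        List.sum_nil]
      have hx : (c2 + 2) * s = c2 * s + 2 * s := by ring
      rw [hc2, hx]
      omega
    have hMsum : M.sum = 2 * n + 1 := by
      rw [hMdef, List.sum_append, hPsum, ← List.sum_append, List.take_append_drop, hesum]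
    have hMPeps : PEps 0 M := by
      intro v hv hv2
      have hv2' : v % 2 = 0 := by simpa using hv2
      by_cases hvs : v = s
      · subst hvs
        have c1 : (e.take (height e (v + 1))).count v = 0 :=
          List.count_eq_zero.2 (fun hmem => by have := hE1mem v hmem; omega)
        have c3 : (e.drop (height e v)).count v = 0 :=
          List.count_eq_zero.2 (fun hmem => by have := hE3mem v hmem; omega)
        have b1 : ((v + 1 : ℕ) == v) = false := by simp
        have b3 : ((v - 1 : ℕ) == v) = false := by simp; omega
        have b2 : ((v : ℕ) == v) = true := by simp
        have hcount : M.count v = c2 := by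
          simp [hM2, List.count_append, List.count_cons, List.count_replicate,
            b1, b2, b3, c1, c3]
        rw [hcount, Nat.even_iff]
        obtain ⟨k, hk⟩ := hcnt_even
        omega
      · have b1 : ((s + 1 : ℕ) == v) = false := by simp; omega
        have b2 : ((s : ℕ) == v) = false := by simp; omega
        have b3 : ((s - 1 : ℕ) == v) = false := by simp; omega
        have hcount : M.count v = (e.take (height e (s + 1))).count v
            + (e.drop (height e s)).count v := by
          simp [hM2, List.count_append, List.count_cons, List.count_replicate, b1, b2, b3]
        have hce : e.count v = (e.take (height e (s + 1))).count v
            + (e.drop (height e s)).count v := by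
          conv_lhs => rw [← List.take_append_drop (height e s) e]
          rw [List.count_append, hQ, List.count_append, List.count_replicate, b2]
          simp
        rw [hcount, ← hce]
        rcases Nat.eq_zero_or_pos (e.count v) with h0 | h0
        · rw [h0]; exact Even.zero
        · exact hePeps' v (List.count_pos_iff.1 h0) hv2'
    have t2a : (e.take (height e s)).take (height e (s + 1)) = e.take (height e (s + 1)) := by
      rw [List.take_take, show height e (s + 1) ⊓ height e s = height e (s + 1) by omega]
    have hSM : ∀ j, (M.take j).sum = (e.take j).sum
        + (if height e (s + 1) + 1 ≤ j ∧ j + 1 ≤ height e s then 1 else 0) := by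
      intro j
      rcases Nat.lt_or_ge j (height e (s + 1) + 1) with hlt | hge
      · rw [if_neg (by omega)]
        have t1 : M.take j = e.take j := by
          rw [hMdef, List.take_append, hPlen,
            show j - height e s = 0 by omega, List.take_zero, List.append_nil,
            hP, List.take_append, hE1len,
            show j - height e (s + 1) = 0 by omega, List.take_zero, List.append_nil,
            List.take_take, show j ⊓ height e (s + 1) = j by omega]
        rw [t1]
        omega
      · rcases Nat.lt_or_ge j (height e s) with hmidj | hgej
        · obtain ⟨r, hr⟩ : ∃ r, j = height e (s + 1) + 1 + r :=
            ⟨j - height e (s + 1) - 1, by omega⟩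
          have hrc : r ≤ c2 := by omega
          have t1 : M.take j
              = e.take (height e (s + 1)) ++ ((s + 1) :: List.replicate r s) := by
            rw [hMdef, List.take_append, hPlen,
              show j - height e s = 0 by omega, List.take_zero, List.append_nil,
              hP, List.take_append,
              List.take_of_length_le (show (e.take (height e (s + 1))).length ≤ j by
                rw [hE1len]; omega),
              hE1len, show j - height e (s + 1) = r + 1 by omega, List.take_succ_cons,
              List.take_append, List.take_replicate, List.length_replicate,
              show r - c2 = 0 by omega, List.take_zero, List.append_nil,
              show r ⊓ c2 = r by omega]
          have t2 : e.take j = e.take (height e (s + 1)) ++ List.replicate (r + 1) s := by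
            conv_lhs => rw [show e.take j = (e.take (height e s)).take j by
              rw [List.take_take, show j ⊓ height e s = j by omega]]
            rw [hQ, List.take_append,
              List.take_of_length_le (show (e.take (height e (s + 1))).length ≤ j by
                rw [hE1len]; omega),
              hE1len, show j - height e (s + 1) = r + 1 by omega,
              List.take_replicate, show (r + 1) ⊓ e.count s = r + 1 by omega]
          rw [t1, t2, if_pos (by omega), List.sum_append, List.sum_append,
            List.sum_cons, List.sum_replicate, List.sum_replicate, smul_eq_mul, smul_eq_mul]
          have hx : (r + 1) * s = r * s + s := by ring
          omega
        · rw [if_neg (by omega)]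
          have t1 : M.take j = P ++ (e.drop (height e s)).take (j - height e s) := by
            rw [hMdef, List.take_append, hPlen,
              List.take_of_length_le (show P.length ≤ j by rw [hPlen]; omega)]
          have t2 : e.take j = e.take (height e s)
              ++ (e.drop (height e s)).take (j - height e s) := by
            conv_lhs => rw [← List.take_append_drop (height e s) e]
            rw [List.take_append, List.take_take,
              show j ⊓ height e s = height e s by omega, List.length_take,
              show height e s ⊓ e.length = height e s by omega]
          rw [t1, t2, List.sum_append, hPsum, List.sum_append]
          omega
    have hMdom : Dom M (dplus (d0 :: dt)) := by
      intro j
      rw [hSM j]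
      by_cases hcond : height e (s + 1) + 1 ≤ j ∧ j + 1 ≤ height e s
      · rw [if_pos hcond]
        exact strict j hcond.1 hcond.2
      · rw [if_neg hcond]
        have := heDom j
        omega
    have hfin := hemax M ⟨hMsorted, hMpos, hMsum⟩ hMPeps hMdom (height e (s + 1) + 1)
    rw [hSM (height e (s + 1) + 1), if_pos ⟨le_refl _, by omega⟩] at hfin
    omega
end

section
/- The map f_BC : P^sp_B(2n+1) → P^sp_C(2n), d ↦ (d⁻)_C, is order-preserving: if d, d' ∈ P^sp_B(2n+1) satisfy d ⪯ d' in the dominance order, then f_BC(d) ⪯ f_BC(d'). -/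
lemma my_sum_take_le (l : List ℕ) (j : ℕ) : (l.take j).sum ≤ l.sum := by
  conv_rhs => rw [← List.take_append_drop j l]
  rw [List.sum_append]
  omega

lemma my_dminus_take_sum (l : List ℕ) (hl : ∀ p ∈ l, 0 < p) (j : ℕ) :
    ((dminus l).take j).sum = min ((l.take j).sum) (l.sum - 1) := by
  rcases l.eq_nil_or_concat' with rfl | ⟨L, a, rfl⟩
  · simp [dminus]
  · have hLpos : ∀ p ∈ L, 0 < p := fun p hp => hl p (by simp [hp])
    have hLfilter : L.filter (fun p => decide (0 < p)) = L :=
      List.filter_eq_self.mpr (fun p hp => by simpa using hLpos p hp)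
    have ha : 0 < a := hl a (by simp)
    have hdm : dminus (L ++ [a]) = L ++ ([a-1].filter (fun p => decide (0 < p))) := by
      simp only [dminus, List.dropLast_concat, List.getLastD_concat, List.filter_append,
        hLfilter]
    have hsum : (L ++ [a]).sum = L.sum + a := by simp
    rcases le_or_gt j L.length with hj | hj
    · rw [List.take_append_of_le_length hj] at *
      have h1 : ((dminus (L ++ [a])).take j).sum = (L.take j).sum := by
        rw [hdm, List.take_append_of_le_length hj]
      have h2 := my_sum_take_le L j
      rw [h1, hsum]
      omega
    · have hLt : L.take j = L := List.take_of_length_le (by omega)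
      have htake : (L ++ [a]).take j = L ++ [a] := List.take_of_length_le (by simp; omega)
      rcases Nat.lt_or_ge a 2 with h2 | h2
      · have haa : a = 1 := by omega
        have : dminus (L ++ [a]) = L := by rw [hdm, haa]; simp
        rw [this, hLt, htake, hsum]
        have := my_sum_take_le L j
        rw [hLt] at this
        omega
      · have : dminus (L ++ [a]) = L ++ [a-1] := by
          rw [hdm]
          congr 1
          rw [List.filter_eq_self.mpr]
          intro p hp; simp at hp ⊢; omega
        rw [this, htake, hsum, List.take_of_length_le (by simp; omega)]
        simp
        omega

lemma my_dminus_dom {N : ℕ} {d d' : List ℕ}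
    (hd : IsPartition N d) (hd' : IsPartition N d') (hdom : Dom d d') :
    Dom (dminus d) (dminus d') := by
  intro j
  rw [my_dminus_take_sum d hd.2.1 j, my_dminus_take_sum d' hd'.2.1 j,
    hd.2.2, hd'.2.2]
  exact min_le_min (hdom j) le_rfl

/-- The map `f_BC : P^sp_B(2n+1) → P^sp_C(2n)`, `d ↦ (d⁻)_C`, is order-preserving for the
dominance order. -/
theorem fBC_monotone (n : ℕ) (d d' : List ℕ)
    (hd : IsPartition (2 * n + 1) d) (hd' : IsPartition (2 * n + 1) d')
    (hdB : PEpsEps 0 1 d) (hd'B : PEpsEps 0 1 d')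
    (hdom : Dom d d')
    (e e' : List ℕ)
    (he : IsCollapse 1 (2 * n) (dminus d) e)
    (he' : IsCollapse 1 (2 * n) (dminus d') e') :
    Dom e e' := by
  have h1 : Dom (dminus d) (dminus d') := my_dminus_dom hd hd' hdom
  have h2 : Dom e (dminus d') := fun j => le_trans (he.2.2.1 j) (h1 j)
  exact he'.2.2.2 e he.1 he.2.1 h2
end
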